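/- The twisting map composition law: for all z, z' > 0 and all row vectors υ, υ' ∈ ℝ^{1×4}, one has C(z'·z, υ' + υ) = C(z', υ') · Z'⁻¹ · C(z, υ) · Z', where Z' := diag(z', I₄, z'⁻¹). In particular C(z', υ')·C(z, υ) ≠ C(z'z, υ'+υ) in general, but the failure is exactly conjugation of the second factor by Z'. -/

import Mathlib

noncomputable section

open Matrix

/-- The 4×4 Minkowski metric `η = diag(1, −1, −1, −1)`. -/
def minkMetric : Matrix (Fin 4) (Fin 4) ℝ := Matrix.diagonal ![1, -1, -1, -1]

/-- A 6×6 real matrix assembled from blocks of sizes `1, 4, 1`. -/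
def blk3 (a : Matrix (Fin 1) (Fin 1) ℝ) (b : Matrix (Fin 1) (Fin 4) ℝ) (c : Matrix (Fin 1) (Fin 1) ℝ)
    (d : Matrix (Fin 4) (Fin 1) ℝ) (e : Matrix (Fin 4) (Fin 4) ℝ) (f : Matrix (Fin 4) (Fin 1) ℝ)
    (g : Matrix (Fin 1) (Fin 1) ℝ) (h : Matrix (Fin 1) (Fin 4) ℝ) (k : Matrix (Fin 1) (Fin 1) ℝ) :
    Matrix (Fin 1 ⊕ Fin 4 ⊕ Fin 1) (Fin 1 ⊕ Fin 4 ⊕ Fin 1) ℝ :=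
  Matrix.of fun i j =>
    match i, j with
    | .inl i, .inl j => a i j
    | .inl i, .inr (.inl j) => b i j
    | .inl i, .inr (.inr j) => c i j
    | .inr (.inl i), .inl j => d i j
    | .inr (.inl i), .inr (.inl j) => e i j
    | .inr (.inl i), .inr (.inr j) => f i j
    | .inr (.inr i), .inl j => g i j
    | .inr (.inr i), .inr (.inl j) => h i j
    | .inr (.inr i), .inr (.inr j) => k i j

/-- A real scalar as a 1×1 matrix. -/
def sc (x : ℝ) : Matrix (Fin 1) (Fin 1) ℝ := Matrix.of fun _ _ => x

/-- The conformal boost `u(r)`, for a row vector `r ∈ ℝ^{1×4}`, with block form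
`[[1, r, ½ r rᵗ], [0, I₄, rᵗ], [0, 0, 1]]`, where `rᵗ = η⁻¹ rᵀ`. -/
def confBoost (r : Matrix (Fin 1) (Fin 4) ℝ) :
    Matrix (Fin 1 ⊕ Fin 4 ⊕ Fin 1) (Fin 1 ⊕ Fin 4 ⊕ Fin 1) ℝ :=
  blk3 (sc 1) r ((1 / 2 : ℝ) • (r * (minkMetric⁻¹ * rᵀ)))
       0 1 (minkMetric⁻¹ * rᵀ)
       0 0 (sc 1)

/-- The twisting map `C(z, υ)`, a 6×6 real matrix with block form
`[[z, υ, (z⁻¹/2)·υυᵗ], [0, I₄, z⁻¹·υᵗ], [0, 0, z⁻¹]]`, where `υᵗ = η⁻¹υᵀ`. -/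
def twistC (z : ℝ) (υ : Matrix (Fin 1) (Fin 4) ℝ) :
    Matrix (Fin 1 ⊕ Fin 4 ⊕ Fin 1) (Fin 1 ⊕ Fin 4 ⊕ Fin 1) ℝ :=
  blk3 (sc z) υ ((z⁻¹ / 2) • (υ * (minkMetric⁻¹ * υᵀ)))
       0 1 (z⁻¹ • (minkMetric⁻¹ * υᵀ))
       0 0 (sc z⁻¹)

/-- The block-diagonal matrix `Z = diag(z, I₄, z⁻¹)`. -/
def dilZ (z : ℝ) : Matrix (Fin 1 ⊕ Fin 4 ⊕ Fin 1) (Fin 1 ⊕ Fin 4 ⊕ Fin 1) ℝ :=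
  blk3 (sc z) 0 0 0 1 0 0 0 (sc z⁻¹)

/-- The twisting map composition law:
`C(z'·z, υ' + υ) = C(z', υ') · Z'⁻¹ · C(z, υ) · Z'` with `Z' = diag(z', I₄, z'⁻¹)`.
In particular `C(z', υ')·C(z, υ) ≠ C(z'z, υ' + υ)` in general, but the failure is exactly
conjugation of the second factor by `Z'`. -/
lemma mink_mul_self : minkMetric * minkMetric = 1 := by
  ext i j
  fin_cases i <;> fin_cases j <;>
    simp [minkMetric, Matrix.mul_apply, Fin.sum_univ_four, Matrix.diagonal, Matrix.one_apply]

lemma mink_inv : minkMetric⁻¹ = minkMetric :=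
  Matrix.inv_eq_right_inv mink_mul_self

lemma dilZ_inv (z : ℝ) (hz : z ≠ 0) : (dilZ z)⁻¹ = dilZ z⁻¹ := by
  apply Matrix.inv_eq_right_inv
  ext i j
  rcases i with i | i | i <;> rcases j with j | j | j <;> fin_cases i <;> fin_cases j <;>
    simp [dilZ, blk3, sc, Matrix.mul_apply, Fintype.sum_sum_type, Fin.sum_univ_four,
      Fin.sum_univ_one, Matrix.one_apply, hz]

lemma fin4_mk2 (h : 2 < 4) : (⟨2, h⟩ : Fin 4) = 2 := rfl
lemma fin4_mk3 (h : 3 < 4) : (⟨3, h⟩ : Fin 4) = 3 := rfl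

set_option maxHeartbeats 4000000 in
theorem twistC_composition :
    (∀ z z' : ℝ, 0 < z → 0 < z' → ∀ υ υ' : Matrix (Fin 1) (Fin 4) ℝ,
      twistC (z' * z) (υ' + υ) = twistC z' υ' * (dilZ z')⁻¹ * twistC z υ * dilZ z') ∧
    ∃ (z z' : ℝ) (υ υ' : Matrix (Fin 1) (Fin 4) ℝ), 0 < z ∧ 0 < z' ∧
      twistC z' υ' * twistC z υ ≠ twistC (z' * z) (υ' + υ) := by
  constructor
  · intro z z' hz hz' υ υ'
    have hz0 : z ≠ 0 := ne_of_gt hz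
    have hz'0 : z' ≠ 0 := ne_of_gt hz'
    rw [dilZ_inv z' hz'0]
    ext i j
    rcases i with i | i | i <;> rcases j with j | j | j <;> fin_cases i <;> fin_cases j <;>
      · simp only [twistC, dilZ, mink_inv]
        simp only [blk3, sc, Matrix.mul_apply, Matrix.add_apply,
          Matrix.smul_apply, Matrix.transpose_apply, Fintype.sum_sum_type, Fin.sum_univ_four,
          Fin.sum_univ_one, Matrix.of_apply, Matrix.one_apply, Matrix.zero_apply, smul_eq_mul,
          minkMetric, Matrix.diagonal_apply]
        norm_num (config := { decide := true }) [fin4_mk2, fin4_mk3, Fin.mk_zero, Fin.mk_one]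
        try field_simp
        try ring
        try simp
  · refine ⟨1, 2, !![1, 0, 0, 0], 0, one_pos, two_pos, ?_⟩
    intro h
    have h2 := congrFun (congrFun h (Sum.inl 0)) (Sum.inr (Sum.inl 0))
    simp only [twistC, blk3, sc, Matrix.mul_apply, Fintype.sum_sum_type, Fin.sum_univ_succ,
      Fin.sum_univ_zero, Matrix.of_apply, Matrix.one_apply, Matrix.zero_apply,
      Matrix.add_apply] at h2
    norm_num [Matrix.one_apply] at h2
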